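/- arXiv:2107.05195 — 2 statements merged into one kernel-verified Lean document; each statement's English description precedes it below -/
import Mathlib

section
/- Let A and B be self-adjoint operators on a Hilbert space with commutator i[A,B] = λ·Id for some real λ. Then there exists a universal constant c > 0 such that for all vectors Ψ (in a suitable dense domain), ‖A²BΨ‖² + ‖ABAΨ‖² + ‖BA²Ψ‖² ≤ c(‖A³Ψ‖² + ‖B³Ψ‖² + λ²‖AΨ‖² + λ²‖BΨ‖²). -/
lemma key {H : Type*} [NormedAddCommGroup H] [InnerProductSpace ℂ H]
    (A B : H →ₗ[ℂ] H) (μ : ℂ)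
    (hA : ∀ x y : H, (inner ℂ (A x) y : ℂ) = inner ℂ x (A y))
    (hB : ∀ x y : H, (inner ℂ (B x) y : ℂ) = inner ℂ x (B y))
    (hc : ∀ x : H, A (B x) = B (A x) - μ • x)
    (Ψ : H) :
    ‖A (A (B Ψ))‖ ^ 2 ≤ ‖B (B (A Ψ))‖ * ‖A (A (A Ψ))‖ + 2 * ‖μ‖ * ‖B Ψ‖ * ‖A (A (A Ψ))‖ := by
  have hc' : ∀ x : H, B (A x) = A (B x) + μ • x := fun x => by rw [hc x]; module
  have e1 : A (A (B Ψ)) = B (A (A Ψ)) - (2*μ) • A Ψ := by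
    rw [hc Ψ, map_sub, map_smul, hc (A Ψ)]; module
  have e3 : B (A (A (B Ψ))) = A (A (B (B Ψ))) + (2*μ) • (A (B Ψ)) := by
    rw [hc' (A (B Ψ)), hc' (B Ψ), map_add, map_smul]; module
  have e4 : A (B (B Ψ)) = B (B (A Ψ)) - (2*μ) • (B Ψ) := by
    rw [hc (B Ψ), hc Ψ, map_sub, map_smul]; module
  set T : ℂ := inner ℂ (B (B (A Ψ))) (A (A (A Ψ))) with hT
  set t : ℂ := inner ℂ (B Ψ) (A (A (A Ψ))) with ht
  have i1 : (inner ℂ (A (B Ψ)) (A (A Ψ)) : ℂ) = t := hA _ _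
  have i2 : (inner ℂ (A (A (B Ψ))) (A Ψ) : ℂ) = t := by rw [hA, hA]
  have i3 : (inner ℂ (A (A (B (B Ψ)))) (A (A Ψ)) : ℂ)
      = T - (starRingEnd ℂ (2*μ)) * t := by
    rw [hA, e4, inner_sub_left, inner_smul_left]
  have e2 : (inner ℂ (A (A (B Ψ))) (A (A (B Ψ))) : ℂ) = T - (2*μ) * t := by
    nth_rewrite 2 [e1]
    rw [inner_sub_right, inner_smul_right, ← hB, e3, inner_add_left, inner_smul_left, i3, i1, i2]
    ring
  calc ‖A (A (B Ψ))‖ ^ 2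
      = ‖(inner ℂ (A (A (B Ψ))) (A (A (B Ψ))) : ℂ)‖ := by
        rw [inner_self_eq_norm_sq_to_K]; simp
    _ = ‖T - (2*μ) * t‖ := by rw [e2]
    _ ≤ ‖T‖ + ‖(2*μ) * t‖ := norm_sub_le _ _
    _ ≤ ‖B (B (A Ψ))‖ * ‖A (A (A Ψ))‖ + 2 * ‖μ‖ * ‖B Ψ‖ * ‖A (A (A Ψ))‖ := by
        have h1 : ‖T‖ ≤ ‖B (B (A Ψ))‖ * ‖A (A (A Ψ))‖ := norm_inner_le_norm _ _
        have h2 : ‖t‖ ≤ ‖B Ψ‖ * ‖A (A (A Ψ))‖ := norm_inner_le_norm _ _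
        have h3 : ‖(2*μ) * t‖ = 2 * ‖μ‖ * ‖t‖ := by rw [norm_mul, norm_mul]; simp
        nlinarith [norm_nonneg μ, norm_nonneg t]

/-- **Interpolation Lemma.** If `A` and `B` are self-adjoint (symmetric) operators with
commutator `i[A,B] = λ·Id` for a real `λ`, then there is a universal constant `c > 0` such that
for all vectors `Ψ`,
`‖A²BΨ‖² + ‖ABAΨ‖² + ‖BA²Ψ‖² ≤ c (‖A³Ψ‖² + ‖B³Ψ‖² + λ²‖AΨ‖² + λ²‖BΨ‖²)`. -/
theorem stmt0 (H : Type*) [NormedAddCommGroup H] [InnerProductSpace ℂ H] :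
    ∃ c : ℝ, 0 < c ∧
      ∀ (A B : H →ₗ[ℂ] H) (lam : ℝ),
        (∀ x y : H, (inner ℂ (A x) y : ℂ) = inner ℂ x (A y)) →
        (∀ x y : H, (inner ℂ (B x) y : ℂ) = inner ℂ x (B y)) →
        (∀ x : H, Complex.I • (A (B x) - B (A x)) = (lam : ℂ) • x) →
        ∀ Ψ : H,
          ‖A (A (B Ψ))‖ ^ 2 + ‖A (B (A Ψ))‖ ^ 2 + ‖B (A (A Ψ))‖ ^ 2 ≤
            c * (‖A (A (A Ψ))‖ ^ 2 + ‖B (B (B Ψ))‖ ^ 2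
              + lam ^ 2 * ‖A Ψ‖ ^ 2 + lam ^ 2 * ‖B Ψ‖ ^ 2) := by
  refine ⟨20, by norm_num, fun A B lam hA hB hComm Ψ => ?_⟩
  set μ : ℂ := Complex.I * (lam : ℂ) with hμdef
  have hc : ∀ x : H, A (B x) = B (A x) - μ • x := by
    intro x
    have h := hComm x
    have h2 : A (B x) - B (A x) = (-Complex.I) • ((lam : ℂ) • x) := by
      rw [← h, smul_smul]; simp
    rw [smul_smul] at h2
    have : A (B x) - B (A x) = -(μ • x) := by
      rw [h2, hμdef, ← neg_smul]; ring_nf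
    rw [sub_eq_iff_eq_add] at this
    rw [this]; module
  have hc' : ∀ x : H, B (A x) = A (B x) - (-μ) • x := by
    intro x; rw [hc x]; module
  have k1 := key A B μ hA hB hc Ψ
  have k2 := key B A (-μ) hB hA hc' Ψ
  rw [norm_neg] at k2
  have hμn : ‖μ‖ = |lam| := by
    rw [hμdef, norm_mul, Complex.norm_I, one_mul, Complex.norm_real, Real.norm_eq_abs]
  -- norm relations for the other two LHS terms
  have n1 : ‖A (B (A Ψ))‖ ≤ ‖A (A (B Ψ))‖ + ‖μ‖ * ‖A Ψ‖ := by
    have e : A (B (A Ψ)) = A (A (B Ψ)) + μ • (A Ψ) := by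
      have h := hc (A Ψ)
      have h2 : B (A Ψ) = A (B Ψ) + μ • Ψ := by rw [hc Ψ]; module
      rw [show B (A Ψ) = A (B Ψ) + μ • Ψ from h2, map_add, map_smul]
    rw [e]
    calc ‖A (A (B Ψ)) + μ • A Ψ‖ ≤ ‖A (A (B Ψ))‖ + ‖μ • A Ψ‖ := norm_add_le _ _
      _ = ‖A (A (B Ψ))‖ + ‖μ‖ * ‖A Ψ‖ := by rw [norm_smul]
  have n2 : ‖B (A (A Ψ))‖ ≤ ‖A (A (B Ψ))‖ + 2 * ‖μ‖ * ‖A Ψ‖ := by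
    have e1 : A (A (B Ψ)) = B (A (A Ψ)) - (2*μ) • A Ψ := by
      rw [hc Ψ, map_sub, map_smul, hc (A Ψ)]; module
    have e : B (A (A Ψ)) = A (A (B Ψ)) + (2*μ) • A Ψ := by rw [e1]; module
    rw [e]
    calc ‖A (A (B Ψ)) + (2*μ) • A Ψ‖ ≤ ‖A (A (B Ψ))‖ + ‖(2*μ) • A Ψ‖ := norm_add_le _ _
      _ = ‖A (A (B Ψ))‖ + 2 * ‖μ‖ * ‖A Ψ‖ := by
          rw [norm_smul, norm_mul]; simp [mul_assoc]
  set m := ‖A (A (B Ψ))‖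
  set s := ‖B (B (A Ψ))‖
  set a := ‖A (A (A Ψ))‖
  set b := ‖B (B (B Ψ))‖
  set p := ‖A Ψ‖
  set q := ‖B Ψ‖
  rw [hμn] at k1 k2 n1 n2
  have hL2 : |lam| ^ 2 = lam ^ 2 := sq_abs lam
  have hm0 : 0 ≤ m := norm_nonneg _
  have hs0 : 0 ≤ s := norm_nonneg _
  have ha0 : 0 ≤ a := norm_nonneg _
  have hb0 : 0 ≤ b := norm_nonneg _
  have hp0 : 0 ≤ p := norm_nonneg _
  have hq0 : 0 ≤ q := norm_nonneg _
  have hL0 : 0 ≤ |lam| := abs_nonneg _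
  have hm2 : m ^ 2 ≤ 2 * (a^2 + b^2 + (|lam| * p)^2 + (|lam| * q)^2) := by
    nlinarith [k1, k2, sq_nonneg (a - s), sq_nonneg (m - b), sq_nonneg (a - |lam| * q),
      sq_nonneg (b - |lam| * p), mul_nonneg hL0 hp0, mul_nonneg hL0 hq0]
  have w1 : ‖A (B (A Ψ))‖ ^ 2 ≤ (m + |lam| * p)^2 := by
    have := pow_le_pow_left₀ (norm_nonneg _) n1 2
    simpa using this
  have w2 : ‖B (A (A Ψ))‖ ^ 2 ≤ (m + 2*(|lam| * p))^2 := by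
    have := pow_le_pow_left₀ (norm_nonneg _) n2 2
    calc ‖B (A (A Ψ))‖ ^ 2 ≤ (m + 2*|lam| * p)^2 := this
      _ = (m + 2*(|lam| * p))^2 := by ring
  nlinarith [hm2, w1, w2, sq_nonneg (m - |lam| * p), sq_nonneg (m - 2*(|lam| * p)),
    mul_nonneg hL0 hp0, mul_nonneg hL0 hq0, hL2, sq_nonneg (|lam| * p), sq_nonneg (|lam| * q)]
end

section
/- Let Γ be a positive self-adjoint trace-class operator on L²(ℝ³) and let |φ⟩⟨φ| be the orthogonal projection onto the span of a unit vector φ. Then the trace norm of S := Γ − |φ⟩⟨φ| is bounded by twice its Hilbert–Schmidt norm: Tr|S| ≤ 2‖S‖_HS. -/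
open scoped InnerProductSpace

set_option maxHeartbeats 1000000 in
/-- Let `Γ` be a positive self-adjoint trace-class operator (here: the one-particle density
matrix, of trace one) on a separable Hilbert space, and let `|φ⟩⟨φ|` be the orthogonal
projection onto the span of a unit vector `φ`.  If `S := Γ − |φ⟩⟨φ|` is diagonalized by a
Hilbert basis `(e n)` with (absolutely summable) eigenvalues `μ n`, then the trace norm of `S`
is bounded by twice its Hilbert–Schmidt norm: `Tr|S| = ∑ |μ n| ≤ 2 (∑ μ n²)^{1/2} = 2‖S‖_HS`. -/
theorem stmt1 {H : Type*} [NormedAddCommGroup H] [InnerProductSpace ℂ H] [CompleteSpace H]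
    (Γ : H →L[ℂ] H) (hΓpos : Γ.IsPositive)
    (φ : H) (hφ : ‖φ‖ = 1)
    (e : HilbertBasis ℕ ℂ H) (μ : ℕ → ℝ)
    -- `(e n)` is an orthonormal eigenbasis of `S = Γ - |φ⟩⟨φ|` with eigenvalues `μ n`
    (heig : ∀ n, Γ (e n) - (inner ℂ φ (e n) : ℂ) • φ = (μ n : ℂ) • e n)
    -- `S` is trace class
    (hsum : Summable fun n => |μ n|)
    -- `Γ` has trace one (it is a one-particle density matrix)
    (htrace : ∑' n, (inner ℂ (e n) (Γ (e n)) : ℂ).re = 1) :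
    ∑' n, |μ n| ≤ 2 * Real.sqrt (∑' n, μ n ^ 2) := by
  have horth : ∀ i j, (inner ℂ (e i) (e j) : ℂ) = if i = j then 1 else 0 :=
    fun i j => orthonormal_iff_ite.mp e.orthonormal i j
  have hΓe : ∀ n, Γ (e n) = (μ n : ℂ) • e n + (inner ℂ φ (e n) : ℂ) • φ := by
    intro n
    have := heig n
    rw [sub_eq_iff_eq_add] at this
    rw [this]
  set p : ℕ → ℂ := fun n => (inner ℂ φ (e n) : ℂ) * (inner ℂ (e n) φ : ℂ) with hp
  have hp_summable : Summable p := e.summable_inner_mul_inner φ φ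
  have hp_tsum : ∑' n, p n = (1 : ℂ) := by
    rw [e.tsum_inner_mul_inner φ φ]
    rw [inner_self_eq_norm_sq_to_K, hφ]; norm_num
  have hre : ∀ n, (inner ℂ (e n) (Γ (e n)) : ℂ).re = μ n + (p n).re := by
    intro n
    rw [hΓe n, inner_add_right, inner_smul_right, inner_smul_right, horth n n, if_pos rfl,
      mul_one]
    simp [hp]
  have hsummu : Summable μ := summable_abs_iff.mp hsum
  have hpre : HasSum (fun n => (p n).re) 1 := by
    have h := Complex.hasSum_re hp_summable.hasSum
    rw [hp_tsum] at h
    simpa using h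
  have htsum_mu : ∑' n, μ n = 0 := by
    have h1 : ∑' n, (μ n + (p n).re) = 1 := by
      rw [← htrace]; exact tsum_congr fun n => (hre n).symm
    rw [Summable.tsum_add hsummu hpre.summable, hpre.tsum_eq] at h1
    linarith
  have hpos_of_orth : ∀ n, (inner ℂ φ (e n) : ℂ) = 0 → 0 ≤ μ n := by
    intro n h0
    have h := hΓpos.inner_nonneg_right (e n)
    replace h := (Complex.nonneg_iff.mp h).1
    rw [hre n] at h
    simpa [hp, h0] using h
  have huniq : ∀ n m, μ n < 0 → μ m < 0 → n = m := by
    intro n m hn hm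
    by_contra hnm
    have hφn : (inner ℂ φ (e n) : ℂ) ≠ 0 := fun h => absurd hn (not_lt.2 (hpos_of_orth n h))
    have hφm : (inner ℂ φ (e m) : ℂ) ≠ 0 := fun h => absurd hm (not_lt.2 (hpos_of_orth m h))
    set a : ℂ := inner ℂ φ (e m) with ha
    set b : ℂ := inner ℂ φ (e n) with hb
    set v : H := a • e n - b • e m with hv
    have hΓv : Γ v = (μ n : ℂ) • a • e n - (μ m : ℂ) • b • e m := by
      rw [hv, map_sub, map_smul, map_smul, hΓe n, hΓe m, ← ha, ← hb]
      rw [smul_add, smul_add]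
      module
    have hkey : (inner ℂ v (Γ v) : ℂ) = ((μ n * ‖a‖ ^ 2 + μ m * ‖b‖ ^ 2 : ℝ) : ℂ) := by
      rw [hΓv, hv, inner_sub_left, inner_sub_right, inner_sub_right]
      simp only [inner_smul_left, inner_smul_right, horth, if_pos rfl, if_neg hnm,
        if_neg (Ne.symm hnm)]
      simp only [if_true, mul_one, mul_zero, sub_zero, zero_sub]
      rw [show a * (starRingEnd ℂ) a = ((‖a‖ ^ 2 : ℝ) : ℂ) from by
            rw [mul_comm]; exact_mod_cast Complex.conj_mul' a,
          show b * (starRingEnd ℂ) b = ((‖b‖ ^ 2 : ℝ) : ℂ) from by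
            rw [mul_comm]; exact_mod_cast Complex.conj_mul' b]
      push_cast
      ring
    have hnonneg := hΓpos.inner_nonneg_right v
    replace hnonneg := (Complex.nonneg_iff.mp hnonneg).1
    rw [hkey] at hnonneg
    rw [Complex.ofReal_re] at hnonneg
    have h1 : 0 < ‖a‖ ^ 2 := pow_pos (norm_pos_iff.mpr hφm) 2
    have h2 : 0 < ‖b‖ ^ 2 := pow_pos (norm_pos_iff.mpr hφn) 2
    nlinarith
  by_cases hexists : ∃ n, μ n < 0
  · obtain ⟨n₀, hn₀⟩ := hexists
    have habs : ∀ n, |μ n| = μ n + (if n = n₀ then -2 * μ n₀ else 0) := by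
      intro n
      by_cases h : n = n₀
      · subst h; rw [abs_of_neg hn₀]; simp; ring
      · have h0 : 0 ≤ μ n := le_of_not_gt fun hneg => h (huniq n n₀ hneg hn₀)
        simp [h, abs_of_nonneg h0]
    have hite : Summable fun n => (if n = n₀ then -2 * μ n₀ else 0 : ℝ) := by
      apply summable_of_ne_finset_zero (s := {n₀})
      intro n hn
      simp only [Finset.mem_singleton] at hn
      simp [hn]
    have h1 : ∑' n, |μ n| = -2 * μ n₀ := by
      rw [tsum_congr habs, Summable.tsum_add hsummu hite, htsum_mu, tsum_ite_eq]
      ring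
    have hC : ∀ n, |μ n| ≤ ∑' k, |μ k| := fun n => Summable.le_tsum hsum n fun j _ => abs_nonneg _
    have hsq : Summable fun n => μ n ^ 2 := by
      refine Summable.of_nonneg_of_le (fun n => sq_nonneg _) (fun n => ?_)
        (hsum.mul_left (∑' k, |μ k|))
      calc μ n ^ 2 = |μ n| * |μ n| := by rw [← sq_abs]; ring
        _ ≤ (∑' k, |μ k|) * |μ n| := mul_le_mul_of_nonneg_right (hC n) (abs_nonneg _)
    have h2 : μ n₀ ^ 2 ≤ ∑' n, μ n ^ 2 := Summable.le_tsum hsq n₀ fun j _ => sq_nonneg _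
    rw [h1]
    calc -2 * μ n₀ = 2 * Real.sqrt (μ n₀ ^ 2) := by
          rw [Real.sqrt_sq_eq_abs, abs_of_neg hn₀]; ring
      _ ≤ 2 * Real.sqrt (∑' n, μ n ^ 2) := by
          have := Real.sqrt_le_sqrt h2
          linarith
  · push_neg at hexists
    have h0 : ∀ n, |μ n| = μ n := fun n => abs_of_nonneg (hexists n)
    rw [tsum_congr h0, htsum_mu]
    have := Real.sqrt_nonneg (∑' n, μ n ^ 2)
    linarith
end
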